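/- On the subshift X_m (real numbers in [0,1] whose binary expansion contains no m+1 consecutive equal digits), the potential ψ is Lipschitz continuous with respect to the shift metric ρ_2 with Lipschitz constant 2^{m+2}, where ρ_2(x,y) = 2^{-k} with k the largest integer such that the binary digits of x and y agree up to position k. -/

import Mathlib

noncomputable def psi (x : ℝ) : ℝ := Real.log (1 - Real.cos (2 * Real.pi * x))

/-- The real number in `[0,1]` with binary digit sequence `x`. -/
noncomputable def val (x : ℕ → Bool) : ℝ := ∑' i : ℕ, (if x i then (1:ℝ) else 0) / 2 ^ (i + 1)

/-- Binary sequences with no `m+1` consecutive equal digits. -/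
def Xm (m : ℕ) : Set (ℕ → Bool) := {x | ∀ ℓ : ℕ, ¬ (∀ j ≤ m, x (ℓ + j) = x ℓ)}

open Real

lemma summable_bits (x : ℕ → Bool) :
    Summable (fun i : ℕ => (if x i then (1:ℝ) else 0) / 2 ^ (i + 1)) := by
  refine Summable.of_nonneg_of_le (fun i => by positivity) (fun i => ?_)
    (summable_geometric_of_lt_one (r := (1:ℝ)/2) (by norm_num) (by norm_num))
  rw [one_div, inv_pow, ← one_div]
  split
  · exact one_div_pow_le_one_div_pow_of_le (by norm_num) (Nat.le_succ i)
  · simp only [zero_div]; positivity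

lemma hasSum_half_pow : HasSum (fun i : ℕ => ((1:ℝ)/2) ^ (i + 1)) 1 := by
  have h := (hasSum_geometric_of_lt_one (r := (1:ℝ)/2) (by norm_num) (by norm_num)).mul_left (1/2)
  have e : (1/2 : ℝ) * (1 - 1/2)⁻¹ = 1 := by norm_num
  rw [e] at h
  convert h using 2 with i
  · rfl
  rw [pow_succ]; ring

lemma val_compl (x : ℕ → Bool) : val x + val (fun i => !x i) = 1 := by
  have h1 := summable_bits x
  have h2 := summable_bits (fun i => !x i)
  have h3 : HasSum (fun i : ℕ =>
      (if x i then (1:ℝ) else 0) / 2 ^ (i + 1) + (if !x i then (1:ℝ) else 0) / 2 ^ (i + 1)) 1 := by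
    convert hasSum_half_pow using 2 with i
    cases h : x i <;> simp <;> rw [div_pow] <;> norm_num
  have := (h1.hasSum.add h2.hasSum).unique h3
  simpa [val] using this

lemma val_lower {m : ℕ} {x : ℕ → Bool} (hx : x ∈ Xm m) : ((1:ℝ)/2) ^ (m + 1) ≤ val x := by
  have h0 := hx 0
  push_neg at h0
  obtain ⟨j, hj, hne⟩ := h0
  -- find an index i0 ≤ m with x i0 = true
  obtain ⟨i0, hi0, hti⟩ : ∃ i0, i0 ≤ m ∧ x i0 = true := by
    cases h : x 0 with
    | true => exact ⟨0, Nat.zero_le m, h⟩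
    | false =>
        refine ⟨j, hj, ?_⟩
        simp only [Nat.zero_add] at hne
        rw [h] at hne; simpa using hne
  have hle := (summable_bits x).le_tsum i0 (fun j _ => by positivity)
  have : ((1:ℝ)/2) ^ (m + 1) ≤ (if x i0 then (1:ℝ) else 0) / 2 ^ (i0 + 1) := by
    rw [hti]; simp only [if_pos]
    rw [one_div, inv_pow, ← one_div]
    exact one_div_pow_le_one_div_pow_of_le (by norm_num) (by omega)
  exact this.trans hle

lemma not_mem_Xm {m : ℕ} {x : ℕ → Bool} (hx : x ∈ Xm m) : (fun i => !x i) ∈ Xm m := by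
  intro ℓ h
  exact hx ℓ (fun j hj => by have := h j hj; simpa using this)

lemma val_upper {m : ℕ} {x : ℕ → Bool} (hx : x ∈ Xm m) : val x ≤ 1 - ((1:ℝ)/2) ^ (m + 1) := by
  have h := val_lower (not_mem_Xm hx)
  have h2 := val_compl x
  linarith

lemma hasSum_tail (k : ℕ) :
    HasSum (fun i : ℕ => if i ≤ k then (0:ℝ) else ((1:ℝ)/2) ^ (i + 1)) (((1:ℝ)/2) ^ (k + 1)) := by
  have hinj : Function.Injective (fun j : ℕ => j + (k + 1)) := add_left_injective (k + 1)
  rw [← hinj.hasSum_iff (f := fun i : ℕ => if i ≤ k then (0:ℝ) else ((1:ℝ)/2) ^ (i + 1))]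
  · have h := (hasSum_geometric_of_lt_one (r := (1:ℝ)/2) (by norm_num) (by norm_num)).mul_left
      (((1:ℝ)/2) ^ (k + 2))
    have e : ((1:ℝ)/2) ^ (k + 2) * (1 - 1/2)⁻¹ = ((1:ℝ)/2) ^ (k + 1) := by
      rw [pow_succ]; field_simp; ring
    rw [e] at h
    convert h using 2 with j
    · rfl
    simp only [Function.comp]
    rw [if_neg (by omega)]
    rw [← pow_add]
    ring_nf
  · intro i hi
    have : i ≤ k := by
      by_contra hik
      exact hi ⟨i - (k+1), by show i - (k+1) + (k+1) = i; omega⟩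
    simp [this]

lemma val_close {x y : ℕ → Bool} {k : ℕ} (h : ∀ i ≤ k, x i = y i) :
    |val x - val y| ≤ ((1:ℝ)/2) ^ (k + 1) := by
  rw [val, val, ← Summable.tsum_sub (summable_bits x) (summable_bits y)]
  have := tsum_of_norm_bounded (f := fun i : ℕ =>
      (if x i then (1:ℝ) else 0) / 2 ^ (i + 1) - (if y i then (1:ℝ) else 0) / 2 ^ (i + 1))
    (hasSum_tail k) ?_
  · simpa using this
  · intro i
    by_cases hik : i ≤ k
    · simp [h i hik, hik]
    · rw [if_neg hik]
      have : ((1:ℝ)/2) ^ (i+1) = 1 / 2 ^ (i+1) := by rw [div_pow]; norm_num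
      rw [this]
      simp only [Real.norm_eq_abs, ← sub_div, abs_div,
        abs_of_pos (show (0:ℝ) < 2 ^ (i+1) by positivity)]
      gcongr
      cases hx : x i <;> cases hy : y i <;> simp

lemma psi_lip {a : ℝ} (ha : 0 < a) (ha2 : a ≤ 1/2) {u v : ℝ}
    (hu : u ∈ Set.Icc a (1-a)) (hv : v ∈ Set.Icc a (1-a)) :
    |psi u - psi v| ≤ (4/a) * |u - v| := by
  set D : ℝ → ℝ := fun t => 2 * π * Real.sin (2*π*t) / (1 - Real.cos (2*π*t)) with hD
  have pi_pos := Real.pi_pos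
  have key : ∀ t ∈ Set.Icc a (1-a),
      (0 < Real.sin (π*t)) ∧ (1 - Real.cos (2*π*t) = 2 * Real.sin (π*t)^2)
      ∧ 2*a ≤ Real.sin (π*t) := by
    intro t ht
    have ht0 : 0 < t := lt_of_lt_of_le ha ht.1
    have ht1 : t < 1 := lt_of_le_of_lt ht.2 (by linarith)
    have hs : 0 < Real.sin (π*t) := by
      apply Real.sin_pos_of_pos_of_lt_pi (by positivity)
      nlinarith
    refine ⟨hs, ?_, ?_⟩
    · have h1 := Real.cos_two_mul (π*t)
      have h2 := Real.sin_sq_add_cos_sq (π*t)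
      have h3 : 2*π*t = 2*(π*t) := by ring
      rw [h3, h1]; nlinarith
    · rcases le_or_gt t (1/2) with hth | hth
      · have := Real.mul_le_sin (x := π*t) (by positivity) (by nlinarith)
        calc 2*a ≤ 2*t := by linarith [ht.1]
          _ = 2/π*(π*t) := by field_simp
          _ ≤ Real.sin (π*t) := this
      · have h1t : 1 - t ≤ 1/2 := by linarith
        have h1t2 : a ≤ 1 - t := by linarith [ht.2]
        have := Real.mul_le_sin (x := π*(1-t)) (by nlinarith) (by nlinarith)
        have e : Real.sin (π*(1-t)) = Real.sin (π*t) := by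
          rw [show π*(1-t) = π - π*t by ring, Real.sin_pi_sub]
        calc 2*a ≤ 2*(1-t) := by linarith
          _ = 2/π*(π*(1-t)) := by field_simp
          _ ≤ Real.sin (π*(1-t)) := this
          _ = Real.sin (π*t) := e
  have hd : ∀ t ∈ Set.Icc a (1-a), HasDerivAt psi (D t) t := by
    intro t ht
    obtain ⟨hs, hcos, -⟩ := key t ht
    have hne : 1 - Real.cos (2*π*t) ≠ 0 := by
      rw [hcos]; exact ne_of_gt (by nlinarith)
    have h1 : HasDerivAt (fun t : ℝ => 2*π*t) (2*π) t := by
      simpa using (hasDerivAt_id t).const_mul (2*π)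
    have h2 := (Real.hasDerivAt_cos (2*π*t)).comp t h1
    have hc : HasDerivAt (fun t : ℝ => 1 - Real.cos (2*π*t)) (2*π*Real.sin (2*π*t)) t := by
      have h3 := h2.const_sub 1
      convert h3 using 1
      · rfl
      · rfl
      · rfl
      ring
    exact hc.log hne
  have bound : ∀ t ∈ Set.Icc a (1-a), ‖D t‖ ≤ 4/a := by
    intro t ht
    obtain ⟨hs, hcos, hsa⟩ := key t ht
    have hDt : D t = 2*π*Real.cos (π*t)/Real.sin (π*t) := by
      rw [hD]
      simp only []
      rw [hcos, show 2*π*t = 2*(π*t) by ring, Real.sin_two_mul]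
      field_simp
    rw [Real.norm_eq_abs, hDt, abs_div, abs_of_pos hs]
    rw [div_le_div_iff₀ hs (by positivity)]
    have hc1 : |Real.cos (π*t)| ≤ 1 := Real.abs_cos_le_one _
    have hpi4 : π ≤ 4 := Real.pi_le_four
    have h2a : 2*a ≤ Real.sin (π*t) := hsa
    calc |2*π*Real.cos (π*t)| * a = 2*π*|Real.cos (π*t)| * a := by
          rw [abs_mul, abs_of_pos (by positivity : (0:ℝ) < 2*π)]
      _ ≤ 2*π*1 * a := by gcongr
      _ ≤ 4 * (2*a) := by nlinarith
      _ ≤ 4 * Real.sin (π*t) := by nlinarith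
  have := Convex.norm_image_sub_le_of_norm_hasDerivWithin_le
    (fun t ht => (hd t ht).hasDerivWithinAt) bound (convex_Icc a (1-a)) hv hu
  simpa [Real.norm_eq_abs] using this

theorem psi_lipschitz_on_Xm (m : ℕ) :
    ∀ x y : ℕ → Bool, x ∈ Xm m → y ∈ Xm m →
      ∀ k : ℕ, (∀ i ≤ k, x i = y i) →
      |psi (val x) - psi (val y)| ≤ (2:ℝ) ^ (m + 2) * (1/2) ^ k := by
  intro x y hx hy k hk
  set a : ℝ := ((1:ℝ)/2)^(m+1) with hadef
  have ha : 0 < a := by positivity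
  have ha2 : a ≤ 1/2 := by
    calc a ≤ ((1:ℝ)/2)^1 := pow_le_pow_of_le_one (by norm_num) (by norm_num) (by omega)
      _ = 1/2 := pow_one _
  have hu : val x ∈ Set.Icc a (1-a) := ⟨val_lower hx, val_upper hx⟩
  have hv : val y ∈ Set.Icc a (1-a) := ⟨val_lower hy, val_upper hy⟩
  have h1 := psi_lip ha ha2 hu hv
  have h2 := val_close hk
  have h3 : (4/a) * |val x - val y| ≤ (4/a) * ((1/2)^(k+1)) :=
    mul_le_mul_of_nonneg_left h2 (by positivity)
  have h4 : (4/a) * (((1:ℝ)/2)^(k+1)) = (2:ℝ) ^ (m + 2) * (1/2) ^ k := by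
    rw [hadef]
    have e1 : ((1:ℝ)/2)^(m+1) = ((2:ℝ)^(m+1))⁻¹ := by rw [one_div, inv_pow]
    have e2 : ((1:ℝ)/2)^(k+1) = ((2:ℝ)^(k+1))⁻¹ := by rw [one_div, inv_pow]
    have e3 : ((1:ℝ)/2)^k = ((2:ℝ)^k)⁻¹ := by rw [one_div, inv_pow]
    rw [e1, e2, e3]
    field_simp
    ring
  linarith [h1, h3, h4.le, h4.ge]
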